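/- Suppose an internal set A ⊆ *ℕ has the enhanced IM property on an infinite hyperfinite interval I, and A ∩ I = B₁ ∪ ⋯ ∪ Bₙ with each Bᵢ internal. Then there exist an index i and an infinite hyperfinite subinterval J ⊆ I such that Bᵢ has the enhanced IM property on J. -/

import Mathlib

open Filter Set MeasureTheory

/-- The hypernatural numbers: the ultrapower of `ℕ` by the hyperfilter. -/
abbrev SN : Type := Filter.Germ (Filter.hyperfilter ℕ : Filter ℕ) ℕ

/-- Membership of a hypernatural in the internal set determined by a sequence of sets. -/
def memF (F : ℕ → Set ℕ) (x : SN) : Prop :=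
  x.liftOn (fun f => ∀ᶠ i in (Filter.hyperfilter ℕ : Filter ℕ), f i ∈ F i)
    (by
      intro f g h
      exact propext (eventually_congr (h.mono fun i hi => by rw [hi])))

/-- A set of hypernaturals is internal if it is determined by a sequence of subsets of `ℕ`. -/
def InternalSet (A : Set SN) : Prop := ∃ F : ℕ → Set ℕ, A = {x | memF F x}

/-- The nonstandard extension `*A ⊆ *ℕ` of a set `A ⊆ ℕ`. -/
def starN (A : Set ℕ) : Set SN := {x | memF (fun _ => A) x}

/-- The canonical map from the hypernaturals to the hyperreals. -/
noncomputable def toR (x : SN) : Hyperreal := Filter.Germ.map (fun n : ℕ => (n : ℝ)) x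

/-- `[y,z]` is an infinite (hyperfinite) interval. -/
def InfInterval (y z : SN) : Prop := ∀ n : ℕ, y + (n : SN) < z

/-- The map `st_I : I → [0,1]`, `st_I(a) = st((a-y)/(z-y))`. -/
noncomputable def stI (y z : SN) (x : SN) : ℝ :=
  Hyperreal.st ((toR x - toR y) / (toR z - toR y))

/-- `λ_I(A)`: Lebesgue measure of the standard part image of `A ∩ I`, `I = [y,z]`. -/
noncomputable def lam (A : Set SN) (y z : SN) : ℝ :=
  (volume (stI y z '' (A ∩ Set.Icc y z))).toReal

/-- `g_A(I)`: the normalized length of the largest gap of `A` on `I = [y,z]`. -/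
noncomputable def gap (A : Set SN) (y z : SN) : ℝ :=
  sSup {r : ℝ | 0 ≤ r ∧ ∃ c d : SN, c ∈ Set.Icc y z ∧ d ∈ Set.Icc y z ∧ c ≤ d ∧
    Set.Icc c d ∩ A = ∅ ∧ (r : Hyperreal) ≤ (toR d - toR c) / (toR z - toR y)}

/-- `A` has the interval-measure (IM) property on `I = [y,z]`. -/
def IMOn (A : Set SN) (y z : SN) : Prop :=
  ∀ ε : ℝ, 0 < ε → ∃ δ : ℝ, 0 < δ ∧ ∀ c d : SN, y ≤ c → c ≤ d → d ≤ z →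
    InfInterval c d → gap A c d ≤ δ → 1 - ε ≤ lam A c d

/-- `A` has the enhanced IM property on `I = [y,z]`. -/
def EnhancedIMOn (A : Set SN) (y z : SN) : Prop := IMOn A y z ∧ 0 < lam A y z

/-- `A ⊆ ℕ` has the standard interval-measure (SIM) property. -/
def SIM (A : Set ℕ) : Prop :=
  (∀ y z : SN, InfInterval y z → IMOn (starN A) y z) ∧
  ∃ y z : SN, InfInterval y z ∧ EnhancedIMOn (starN A) y z

/-- `A ⊆ ℕ` is supra-SIM if it contains a SIM set. -/
def SupraSIM (A : Set ℕ) : Prop := ∃ B ⊆ A, SIM B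

/-! ### Auxiliary infrastructure -/

namespace Stmt2Aux

open Hyperreal

local notation "𝓤" => (Filter.hyperfilter ℕ : Filter ℕ)

lemma SN.exists_rep (x : SN) : ∃ f : ℕ → ℕ, x = (↑f : SN) :=
  ⟨_, (Quot.exists_rep x).choose_spec.symm⟩

lemma coeN_le {f g : ℕ → ℕ} : (↑f : SN) ≤ ↑g ↔ ∀ᶠ i in 𝓤, f i ≤ g i := Filter.Germ.coe_le

lemma coeN_lt {f g : ℕ → ℕ} : (↑f : SN) < ↑g ↔ ∀ᶠ i in 𝓤, f i < g i := Filter.Germ.coe_lt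

lemma ofSeq_le {f g : ℕ → ℝ} : ofSeq f ≤ ofSeq g ↔ ∀ᶠ i in 𝓤, f i ≤ g i := Filter.Germ.coe_le

lemma ofSeq_lt {f g : ℕ → ℝ} : ofSeq f < ofSeq g ↔ ∀ᶠ i in 𝓤, f i < g i := Filter.Germ.coe_lt

lemma toR_coe (f : ℕ → ℕ) : toR ↑f = ofSeq (fun i => (f i : ℝ)) := rfl

lemma toR_le_toR {a b : SN} : toR a ≤ toR b ↔ a ≤ b := by
  obtain ⟨f, rfl⟩ := SN.exists_rep a
  obtain ⟨g, rfl⟩ := SN.exists_rep b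
  rw [toR_coe, toR_coe, ofSeq_le, coeN_le]
  exact eventually_congr (Eventually.of_forall fun i => Nat.cast_le)

lemma toR_lt_toR {a b : SN} : toR a < toR b ↔ a < b := by
  obtain ⟨f, rfl⟩ := SN.exists_rep a
  obtain ⟨g, rfl⟩ := SN.exists_rep b
  rw [toR_coe, toR_coe, ofSeq_lt, coeN_lt]
  exact eventually_congr (Eventually.of_forall fun i => Nat.cast_lt)

lemma infInterval_eventually {f g : ℕ → ℕ} (h : InfInterval ↑f ↑g) (n : ℕ) :
    ∀ᶠ i in 𝓤, f i + n < g i := by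
  have := h n
  rw [show ((n : ℕ) : SN) = (↑(fun _ : ℕ => n) : SN) from rfl] at this
  rw [show (↑f + (↑(fun _ : ℕ => n) : SN)) = (↑(fun i => f i + n) : SN) from rfl] at this
  exact coeN_lt.1 this

lemma infLt {c d : SN} (h : InfInterval c d) : c < d := by
  have := h 0
  simpa using this

lemma infLe {c d : SN} (h : InfInterval c d) : c ≤ d := (infLt h).le

/-- The length of an infinite interval is a positive infinite hyperreal. -/
lemma infPos {c d : SN} (h : InfInterval c d) :
    InfinitePos (toR d - toR c) := by
  intro r
  obtain ⟨f, rfl⟩ := SN.exists_rep c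
  obtain ⟨g, rfl⟩ := SN.exists_rep d
  obtain ⟨n, hn⟩ := exists_nat_gt r
  have h2 := infInterval_eventually h n
  rw [toR_coe, toR_coe]
  rw [show ofSeq (fun i => (g i : ℝ)) - ofSeq (fun i => (f i : ℝ))
      = ofSeq (fun i => (g i : ℝ) - (f i : ℝ)) from rfl]
  rw [show ((r : ℝ) : ℝ*) = ofSeq (fun _ => r) from rfl]
  rw [ofSeq_lt]
  filter_upwards [h2] with i hi
  have : (f i : ℝ) + n < g i := by exact_mod_cast Nat.cast_lt.2 hi
  linarith [hn.le]

lemma inf_toR_lt {c d : SN} (h : InfInterval c d) : toR c < toR d :=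
  toR_lt_toR.2 (infLt h)

lemma lenPos {c d : SN} (h : InfInterval c d) : (0:ℝ*) < toR d - toR c :=
  sub_pos.2 (inf_toR_lt h)

end Stmt2Aux

namespace Stmt2Aux
open Hyperreal

lemma not_infinite_of_icc01 {w : ℝ*} (h0 : 0 ≤ w) (h1 : w ≤ 1) : ¬ Infinite w :=
  not_infinite_iff_exist_lt_gt.2 ⟨-1, 2, lt_of_lt_of_le (by norm_num) h0,
    lt_of_le_of_lt h1 (by norm_num)⟩

lemma ratio_mem_icc01 {c d x : SN} (hcd : c < d) (hx : x ∈ Set.Icc c d) :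
    (0:ℝ*) ≤ (toR x - toR c) / (toR d - toR c) ∧ (toR x - toR c) / (toR d - toR c) ≤ 1 := by
  have hlen : (0:ℝ*) < toR d - toR c := sub_pos.2 (toR_lt_toR.2 hcd)
  constructor
  · exact div_nonneg (sub_nonneg.2 (toR_le_toR.2 hx.1)) hlen.le
  · rw [div_le_one hlen]
    exact sub_le_sub_right (toR_le_toR.2 hx.2) _

lemma stI_mem_icc01 {c d x : SN} (hcd : c < d) (hx : x ∈ Set.Icc c d) :
    stI c d x ∈ Set.Icc (0:ℝ) 1 := by
  obtain ⟨h0, h1⟩ := ratio_mem_icc01 hcd hx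
  have hni := not_infinite_of_icc01 h0 h1
  constructor
  · have := st_le_of_le not_infinite_zero hni h0
    rwa [show st (0:ℝ*) = (0:ℝ) by exact_mod_cast st_id_real 0] at this
  · have h1' : (toR x - toR c) / (toR d - toR c) ≤ ((1:ℝ) : ℝ*) := by exact_mod_cast h1
    have := st_le_of_le hni (not_infinite_real 1) h1'
    rwa [st_id_real] at this

lemma stImage_subset_icc01 {D : Set SN} {c d : SN} (hcd : c < d) :
    stI c d '' (D ∩ Set.Icc c d) ⊆ Set.Icc (0:ℝ) 1 := by
  rintro t ⟨x, ⟨-, hx⟩, rfl⟩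
  exact stI_mem_icc01 hcd hx

lemma volume_stImage_ne_top {D : Set SN} {c d : SN} (hcd : c < d) :
    volume (stI c d '' (D ∩ Set.Icc c d)) ≠ ⊤ := by
  refine ne_top_of_le_ne_top ?_ (measure_mono (stImage_subset_icc01 hcd))
  simp [Real.volume_Icc]

lemma lam_nonneg (D : Set SN) (c d : SN) : 0 ≤ lam D c d := ENNReal.toReal_nonneg

lemma lam_pos_iff {D : Set SN} {c d : SN} (hcd : c < d) :
    0 < lam D c d ↔ volume (stI c d '' (D ∩ Set.Icc c d)) ≠ 0 := by
  rw [lam, ENNReal.toReal_pos_iff]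
  constructor
  · rintro ⟨h, -⟩; exact h.ne'
  · intro h; exact ⟨h.bot_lt, lt_top_iff_ne_top.2 (volume_stImage_ne_top hcd)⟩

lemma lam_le_lam {D D' : Set SN} {c d : SN} (hcd : c < d)
    (h : volume (stI c d '' (D ∩ Set.Icc c d)) ≤ volume (stI c d '' (D' ∩ Set.Icc c d))) :
    lam D c d ≤ lam D' c d :=
  ENNReal.toReal_le_toReal (volume_stImage_ne_top hcd) (volume_stImage_ne_top hcd) |>.2 h

/-- Comparing largest gaps of a set and a subset. -/
lemma gap_le_of_subset {Aset Bset : Set SN} {c d : SN} (hcd : c < d)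
    (hsub : ∀ x, x ∈ Set.Icc c d → x ∈ Bset → x ∈ Aset) {δ : ℝ} (hδ : 0 ≤ δ)
    (hB : gap Bset c d ≤ δ) : gap Aset c d ≤ δ := by
  have hlen : (0:ℝ*) < toR d - toR c := sub_pos.2 (toR_lt_toR.2 hcd)
  -- the B gap set is bounded above by 1
  have hbdd : BddAbove {r : ℝ | 0 ≤ r ∧ ∃ a b : SN, a ∈ Set.Icc c d ∧ b ∈ Set.Icc c d ∧ a ≤ b ∧
      Set.Icc a b ∩ Bset = ∅ ∧ (r : ℝ*) ≤ (toR b - toR a) / (toR d - toR c)} := by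
    refine ⟨1, ?_⟩
    rintro r ⟨-, a, b, ha, hb, -, -, hr⟩
    have : (toR b - toR a) / (toR d - toR c) ≤ 1 := by
      rw [div_le_one hlen]
      exact sub_le_sub (toR_le_toR.2 hb.2) (toR_le_toR.2 ha.1)
    exact_mod_cast hr.trans this
  refine Real.sSup_le ?_ hδ
  rintro r ⟨hr0, a, b, ha, hb, hab, hempty, hr⟩
  have hmem : r ∈ {r : ℝ | 0 ≤ r ∧ ∃ a b : SN, a ∈ Set.Icc c d ∧ b ∈ Set.Icc c d ∧ a ≤ b ∧
      Set.Icc a b ∩ Bset = ∅ ∧ (r : ℝ*) ≤ (toR b - toR a) / (toR d - toR c)} := by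
    refine ⟨hr0, a, b, ha, hb, hab, ?_, hr⟩
    ext x
    simp only [Set.mem_inter_iff, Set.mem_empty_iff_false, iff_false, not_and]
    intro hxab hxB
    have hxcd : x ∈ Set.Icc c d := ⟨ha.1.trans hxab.1, hxab.2.trans hb.2⟩
    have : x ∈ Set.Icc a b ∩ Aset := ⟨hxab, hsub x hxcd hxB⟩
    rw [hempty] at this
    exact this
  exact (le_csSup hbdd hmem).trans hB

end Stmt2Aux

namespace Stmt2Aux
open Hyperreal

/-- Bridge: a hyperreal inequality expressed pointwise. -/
lemma abs_ineq_iff (h0 f g : ℕ → ℕ) (t b : ℝ) :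
    (|(toR ↑h0 - toR ↑f) - (t:ℝ*) * (toR ↑g - toR ↑f)| ≤ (b:ℝ*) * (toR ↑g - toR ↑f)) ↔
      ∀ᶠ i in (Filter.hyperfilter ℕ : Filter ℕ),
        |((h0 i : ℝ) - f i) - t * ((g i : ℝ) - f i)| ≤ b * ((g i : ℝ) - f i) := by
  have h1 : (toR ↑h0 - toR ↑f) - (t:ℝ*) * (toR ↑g - toR ↑f)
      = ofSeq (fun i => ((h0 i : ℝ) - f i) - t * ((g i : ℝ) - f i)) := rfl
  have h2 : |ofSeq (fun i => ((h0 i : ℝ) - f i) - t * ((g i : ℝ) - f i))|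
      = ofSeq (fun i => |((h0 i : ℝ) - f i) - t * ((g i : ℝ) - f i)|) := by
    exact Filter.Germ.abs_def _
  rw [h1, h2]
  exact ofSeq_le

lemma eventually_ge_U (m : ℕ) : ∀ᶠ i in (Filter.hyperfilter ℕ : Filter ℕ), m ≤ i := by
  apply Filter.Eventually.filter_mono (Filter.hyperfilter_le_cofinite)
  rw [Nat.cofinite_eq_atTop]
  exact Filter.eventually_atTop.2 ⟨m, fun b hb => hb⟩

/-- The auxiliary bound sequence. -/
noncomputable def bnd (m : ℕ) : ℝ := 1/(m+1 : ℝ)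

lemma bnd_pos (m : ℕ) : 0 < bnd m := by unfold bnd; positivity

lemma bnd_anti {m m' : ℕ} (h : m ≤ m') : bnd m' ≤ bnd m := by
  unfold bnd
  apply one_div_le_one_div_of_le (by positivity)
  have : (m:ℝ) ≤ m' := by exact_mod_cast h
  linarith

/-- The standard part image of an internal set on an infinite interval is closed
(countable saturation). -/
lemma isClosed_stImage {D : Set SN} (hD : InternalSet D) {c d : SN} (hcd : InfInterval c d) :
    IsClosed (stI c d '' (D ∩ Set.Icc c d)) := by
  classical
  obtain ⟨FD, rfl⟩ := hD
  obtain ⟨f, hf⟩ := SN.exists_rep c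
  obtain ⟨g, hg⟩ := SN.exists_rep d
  subst hf; subst hg
  refine isClosed_of_closure_subset ?_
  intro t ht
  rw [Metric.mem_closure_iff] at ht
  -- the internal approximating sets
  set S : ℕ → ℕ → Set ℕ := fun m i =>
    match m with
    | 0 => Set.univ
    | (m+1) => {a | a ∈ FD i ∧ f i ≤ a ∧ a ≤ g i ∧
        |((a : ℝ) - f i) - t * ((g i : ℝ) - f i)| ≤ bnd m * ((g i : ℝ) - f i)}
    with hS
  have Santi : ∀ {m m' : ℕ}, m ≤ m' → ∀ i, S m' i ⊆ S m i := by
    intro m m' hmm' i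
    match m, m' with
    | 0, m' => exact fun a _ => Set.mem_univ a
    | (m+1), 0 => omega
    | (m+1), (m'+1) =>
      rintro a ⟨ha1, ha2, ha3, ha4⟩
      refine ⟨ha1, ha2, ha3, ha4.trans ?_⟩
      rcases le_or_gt (0:ℝ) ((g i : ℝ) - f i) with h | h
      · exact mul_le_mul_of_nonneg_right (bnd_anti (Nat.succ_le_succ_iff.1 hmm')) h
      · exfalso
        have h1 := bnd_pos m'
        nlinarith [abs_nonneg (((a : ℝ) - f i) - t * ((g i : ℝ) - f i))]
  -- the germ-level characterization
  have bridge : ∀ (h0 : ℕ → ℕ) (m : ℕ),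
      ((↑h0 : SN) ∈ {x | memF FD x} ∧ (↑h0 : SN) ∈ Set.Icc (↑f : SN) ↑g ∧
        |(toR ↑h0 - toR ↑f) - (t:ℝ*) * (toR ↑g - toR ↑f)| ≤
          ((bnd m : ℝ):ℝ*) * (toR ↑g - toR ↑f)) ↔
      ∀ᶠ i in (Filter.hyperfilter ℕ : Filter ℕ), h0 i ∈ S (m+1) i := by
    intro h0 m
    rw [abs_ineq_iff]
    constructor
    · rintro ⟨h1, ⟨h2, h3⟩, h4⟩
      have h1' : ∀ᶠ i in (Filter.hyperfilter ℕ : Filter ℕ), h0 i ∈ FD i := h1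
      filter_upwards [h1', coeN_le.1 h2, coeN_le.1 h3, h4] with i a b cc dd
      exact ⟨a, b, cc, dd⟩
    · intro h
      refine ⟨?_, ⟨?_, ?_⟩, ?_⟩
      · exact h.mono fun i hi => hi.1
      · exact coeN_le.2 (h.mono fun i hi => hi.2.1)
      · exact coeN_le.2 (h.mono fun i hi => hi.2.2.1)
      · exact h.mono fun i hi => hi.2.2.2
  -- nonemptiness of the internal approximations
  have hne : ∀ m : ℕ, ∀ᶠ i in (Filter.hyperfilter ℕ : Filter ℕ), (S m i).Nonempty := by
    intro m
    match m with
    | 0 => exact Filter.Eventually.of_forall fun i => ⟨0, Set.mem_univ 0⟩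
    | (m+1) => ?_
    obtain ⟨b, hbF, hbd⟩ := ht (bnd m / 2) (by have := bnd_pos m; positivity)
    obtain ⟨x, ⟨hxD, hxIcc⟩, hxb⟩ := hbF
    obtain ⟨h0, rfl⟩ := SN.exists_rep x
    set ratio : ℝ* := (toR ↑h0 - toR ↑f) / (toR ↑g - toR ↑f) with hratio
    have hlen : (0:ℝ*) < toR ↑g - toR ↑f := lenPos hcd
    have hni : ¬ Infinite ratio := by
      obtain ⟨p1, p2⟩ := ratio_mem_icc01 (infLt hcd) hxIcc
      exact not_infinite_of_icc01 p1 p2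
    have hst : IsSt ratio (stI ↑f ↑g ↑h0) := by
      rw [stI]; exact isSt_st' hni
    have key : |ratio - (t:ℝ*)| ≤ ((bnd m : ℝ) : ℝ*) := by
      have h5 := (isSt_iff_abs_sub_lt_delta.1 hst (bnd m / 2)
        (by have := bnd_pos m; positivity)).le
      have hbt : |stI ↑f ↑g ↑h0 - t| ≤ bnd m / 2 := by
        rw [← hxb] at hbd
        rw [← Real.dist_eq, dist_comm]
        exact hbd.le
      have hbt' : |((stI ↑f ↑g ↑h0 : ℝ):ℝ*) - (t:ℝ*)| ≤ ((bnd m / 2 : ℝ) : ℝ*) := by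
        rw [← Hyperreal.coe_sub, ← Hyperreal.coe_abs]
        exact_mod_cast hbt
      calc |ratio - (t:ℝ*)|
          ≤ |ratio - ((stI ↑f ↑g ↑h0 : ℝ):ℝ*)| + |((stI ↑f ↑g ↑h0 : ℝ):ℝ*) - (t:ℝ*)| :=
            abs_sub_le _ _ _
        _ ≤ ((bnd m / 2 : ℝ) : ℝ*) + ((bnd m / 2 : ℝ) : ℝ*) := add_le_add h5 hbt'
        _ = ((bnd m : ℝ) : ℝ*) := by
            rw [← Hyperreal.coe_add]
            norm_num
    have key2 : |(toR ↑h0 - toR ↑f) - (t:ℝ*) * (toR ↑g - toR ↑f)| ≤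
        ((bnd m : ℝ) : ℝ*) * (toR ↑g - toR ↑f) := by
      have hnum : (toR ↑h0 - toR ↑f) - (t:ℝ*) * (toR ↑g - toR ↑f)
          = (ratio - (t:ℝ*)) * (toR ↑g - toR ↑f) := by
        rw [hratio]; field_simp
      rw [hnum, abs_mul, abs_of_pos hlen]
      exact mul_le_mul_of_nonneg_right key hlen.le
    have := (bridge h0 m).1 ⟨hxD, hxIcc, key2⟩
    exact this.mono fun i hi => ⟨h0 i, hi⟩
  -- diagonalization
  set N : ℕ → ℕ := fun i => Nat.findGreatest (fun m => (S m i).Nonempty) i with hN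
  set pick : ℕ → ℕ := fun i => if h : (S (N i) i).Nonempty then h.some else 0 with hpick
  have hpickS : ∀ m : ℕ, ∀ᶠ i in (Filter.hyperfilter ℕ : Filter ℕ), pick i ∈ S m i := by
    intro m
    filter_upwards [hne m, eventually_ge_U m] with i hSm hmi
    have hNge : m ≤ N i := Nat.le_findGreatest hmi hSm
    have hNne : (S (N i) i).Nonempty :=
      Nat.findGreatest_spec (P := fun m => (S m i).Nonempty) hmi hSm
    have : pick i ∈ S (N i) i := by
      rw [hpick]; simp only [hNne, dif_pos]; exact hNne.some_mem
    exact Santi hNge i this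
  -- the limit point
  have hmem : ∀ m : ℕ, (↑pick : SN) ∈ {x | memF FD x} ∧
      (↑pick : SN) ∈ Set.Icc (↑f : SN) ↑g ∧
      |(toR ↑pick - toR ↑f) - (t:ℝ*) * (toR ↑g - toR ↑f)| ≤
        ((bnd m : ℝ) : ℝ*) * (toR ↑g - toR ↑f) :=
    fun m => (bridge pick m).2 (hpickS (m+1))
  have hlen : (0:ℝ*) < toR ↑g - toR ↑f := lenPos hcd
  set ratio : ℝ* := (toR ↑pick - toR ↑f) / (toR ↑g - toR ↑f) with hratio
  have hratio_abs : ∀ m : ℕ, |ratio - (t:ℝ*)| ≤ ((bnd m : ℝ) : ℝ*) := by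
    intro m
    have h4 := (hmem m).2.2
    have hnum : ratio - (t:ℝ*) = ((toR ↑pick - toR ↑f) - (t:ℝ*) * (toR ↑g - toR ↑f))
        / (toR ↑g - toR ↑f) := by
      rw [hratio]; field_simp
    rw [hnum, abs_div, abs_of_pos hlen, div_le_iff₀ hlen]
    exact h4
  have hIsSt : IsSt ratio t := by
    rw [isSt_iff_abs_sub_lt_delta]
    intro δ hδ
    obtain ⟨m, hm⟩ := exists_nat_one_div_lt hδ
    calc |ratio - (t:ℝ*)| ≤ ((bnd m : ℝ) : ℝ*) := hratio_abs m
      _ < (δ : ℝ*) := by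
          rw [Hyperreal.coe_lt_coe]
          exact hm
  exact ⟨↑pick, ⟨(hmem 0).1, (hmem 0).2.1⟩, hIsSt.st_eq⟩

end Stmt2Aux

namespace Stmt2Aux
open Hyperreal

/-- For infinite positive `L` and standard `e > 0`, `1 ≤ e·L`. -/
lemma one_le_coe_mul {L : ℝ*} (hLinf : InfinitePos L) {e : ℝ} (he : 0 < e) :
    (1:ℝ*) ≤ (e:ℝ*) * L := by
  have h1 : ((1/e : ℝ):ℝ*) < L := hLinf (1/e)
  have h2 : (e:ℝ*) * ((1/e : ℝ):ℝ*) < (e:ℝ*) * L :=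
    mul_lt_mul_of_pos_left h1 (by exact_mod_cast he)
  have h3 : (e:ℝ*) * ((1/e : ℝ):ℝ*) = 1 := by
    rw [← Hyperreal.coe_mul]
    norm_cast
    field_simp
  linarith [h2, h3.symm.le]

/-- Standard part of a quotient squeezed between `cst·L - 2` and `cst·L + 2`. -/
lemma isSt_div_of_bounds {w L : ℝ*} {cst : ℝ} (hLpos : 0 < L) (hLinf : InfinitePos L)
    (h1 : (cst:ℝ*) * L - 2 ≤ w) (h2 : w ≤ (cst:ℝ*) * L + 2) : IsSt (w / L) cst := by
  rw [isSt_iff_abs_sub_lt_delta]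
  intro δ hδ
  have hLne : L ≠ 0 := hLpos.ne'
  have habs : |w / L - (cst:ℝ*)| ≤ 2 / L := by
    rw [abs_sub_le_iff]
    constructor
    · have e : w / L - (cst:ℝ*) = (w - (cst:ℝ*) * L) / L := by field_simp; try ring
      rw [e, div_le_div_iff₀ hLpos hLpos]
      exact mul_le_mul_of_nonneg_right (by linarith) hLpos.le
    · have e : (cst:ℝ*) - w / L = ((cst:ℝ*) * L - w) / L := by field_simp; try ring
      rw [e, div_le_div_iff₀ hLpos hLpos]
      exact mul_le_mul_of_nonneg_right (by linarith) hLpos.le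
  have h2Lδ : 2 / L < (δ:ℝ*) := by
    rw [div_lt_iff₀ hLpos]
    have h3 := one_le_coe_mul hLinf (show 0 < δ/3 by linarith)
    have e1 : ((δ/3 : ℝ):ℝ*) * L * 3 = (δ:ℝ*) * L := by
      push_cast
      ring
    linarith [h3]
  exact lt_of_le_of_lt habs h2Lδ

/-- Construction of the hyperfinite subinterval corresponding to a standard
subinterval `[α,β] ⊆ [0,1]`. -/
lemma subinterval_exists {p q : SN} (hpq : InfInterval p q) {α β : ℝ}
    (hα : 0 ≤ α) (hαβ : α < β) (hβ : β ≤ 1) :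
    ∃ p' q' : SN, p ≤ p' ∧ q' ≤ q ∧ InfInterval p' q' ∧
      (∀ x ∈ Set.Icc p' q', stI p q x = α + (β - α) * stI p' q' x) ∧
      (∀ x ∈ Set.Icc p q, stI p q x ∈ Set.Ioo α β → x ∈ Set.Icc p' q') := by
  obtain ⟨f, rfl⟩ := SN.exists_rep p
  obtain ⟨g, rfl⟩ := SN.exists_rep q
  have hβ0 : (0:ℝ) ≤ β := le_of_lt (lt_of_le_of_lt hα hαβ)
  set Li : ℕ → ℝ := fun i => (g i : ℝ) - f i with hLi
  set sfun : ℕ → ℕ := fun i => ⌈α * Li i⌉₊ with hsfun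
  set tfun : ℕ → ℕ := fun i => ⌊β * Li i⌋₊ with htfun
  set p' : SN := ↑(fun i => f i + sfun i) with hp'
  set q' : SN := ↑(fun i => f i + tfun i) with hq'
  have hfg : ∀ᶠ i in (Filter.hyperfilter ℕ : Filter ℕ), (0:ℝ) ≤ Li i := by
    filter_upwards [infInterval_eventually hpq 0] with i hi
    have : f i < g i := by omega
    have : (f i : ℝ) < g i := by exact_mod_cast this
    rw [hLi]; dsimp only; linarith
  have hLgt : ∀ m : ℕ, ∀ᶠ i in (Filter.hyperfilter ℕ : Filter ℕ), (m:ℝ) < Li i := by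
    intro m
    filter_upwards [infInterval_eventually hpq m] with i hi
    have : (f i : ℝ) + m < g i := by exact_mod_cast hi
    rw [hLi]; dsimp only; linarith [Nat.cast_nonneg (α := ℝ) (f i)]
  -- hyperreal length and bounds
  have hLpos : (0:ℝ*) < toR ↑g - toR ↑f := lenPos hpq
  have hLinf : InfinitePos (toR ↑g - toR ↑f) := infPos hpq
  have hLne : toR ↑g - toR ↑f ≠ 0 := hLpos.ne'
  have eL : toR ↑g - toR ↑f = ofSeq Li := rfl
  have esH : toR p' - toR ↑f = ofSeq (fun i => (sfun i : ℝ)) := by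
    rw [hp']
    rw [show toR ↑(fun i => f i + sfun i) - toR ↑f
        = ofSeq (fun i => ((f i + sfun i : ℕ) : ℝ) - (f i : ℝ)) from rfl]
    congr 1
    funext i
    push_cast
    ring
  have etH : toR q' - toR ↑f = ofSeq (fun i => (tfun i : ℝ)) := by
    rw [hq']
    rw [show toR ↑(fun i => f i + tfun i) - toR ↑f
        = ofSeq (fun i => ((f i + tfun i : ℕ) : ℝ) - (f i : ℝ)) from rfl]
    congr 1
    funext i
    push_cast
    ring
  have b1 : (α:ℝ*) * (toR ↑g - toR ↑f) ≤ toR p' - toR ↑f := by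
    rw [esH, eL, show (α:ℝ*) * ofSeq Li = ofSeq (fun i => α * Li i) from rfl, ofSeq_le]
    exact Filter.Eventually.of_forall fun i => Nat.le_ceil _
  have b2 : toR p' - toR ↑f ≤ (α:ℝ*) * (toR ↑g - toR ↑f) + 1 := by
    rw [esH, eL, show (α:ℝ*) * ofSeq Li + 1 = ofSeq (fun i => α * Li i + 1) from rfl, ofSeq_le]
    filter_upwards [hfg] with i hi
    exact (Nat.ceil_lt_add_one (mul_nonneg hα hi)).le
  have b3 : (β:ℝ*) * (toR ↑g - toR ↑f) - 1 ≤ toR q' - toR ↑f := by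
    rw [etH, eL, show (β:ℝ*) * ofSeq Li - 1 = ofSeq (fun i => β * Li i - 1) from rfl, ofSeq_le]
    exact Filter.Eventually.of_forall fun i => (Nat.sub_one_lt_floor _).le
  have b4 : toR q' - toR ↑f ≤ (β:ℝ*) * (toR ↑g - toR ↑f) := by
    rw [etH, eL, show (β:ℝ*) * ofSeq Li = ofSeq (fun i => β * Li i) from rfl, ofSeq_le]
    filter_upwards [hfg] with i hi
    exact Nat.floor_le (mul_nonneg hβ0 hi)
  have hple : (↑f : SN) ≤ p' := by
    rw [hp', coeN_le]
    exact Filter.Eventually.of_forall fun i => Nat.le_add_right _ _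
  have hqle : q' ≤ ↑g := by
    rw [hq', coeN_le]
    filter_upwards [hfg] with i hi
    have h1 : (tfun i : ℝ) ≤ β * Li i := Nat.floor_le (mul_nonneg hβ0 hi)
    have h2 : β * Li i ≤ Li i := by nlinarith
    have h4 : (tfun i : ℝ) ≤ (g i : ℝ) - f i := h1.trans h2
    have h3 : (f i : ℝ) + tfun i ≤ g i := by linarith
    exact_mod_cast h3
  have hinf' : InfInterval p' q' := by
    intro n
    obtain ⟨m, hm⟩ := exists_nat_gt ((n + 2) / (β - α))
    rw [hp', hq', show (↑(fun i => f i + sfun i) : SN) + (n : SN)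
        = ↑(fun i => f i + sfun i + n) from rfl, coeN_lt]
    filter_upwards [hLgt m, hfg] with i hL0 hpos
    have hβα : (0:ℝ) < β - α := by linarith
    have hmm : (n:ℝ) + 2 < (β - α) * m := by
      rw [div_lt_iff₀ hβα] at hm
      linarith
    have hLm : (β - α) * m < (β - α) * Li i := by
      apply mul_lt_mul_of_pos_left hL0 hβα
    have hsb : (sfun i : ℝ) < α * Li i + 1 := Nat.ceil_lt_add_one (mul_nonneg hα hpos)
    have htb : β * Li i - 1 < (tfun i : ℝ) := Nat.sub_one_lt_floor _
    have : (sfun i : ℝ) + n < tfun i := by nlinarith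
    have : (f i : ℝ) + sfun i + n < f i + tfun i := by linarith
    exact_mod_cast this
  have hLpos' : (0:ℝ*) < toR q' - toR p' := lenPos hinf'
  have hLne' : toR q' - toR p' ≠ 0 := hLpos'.ne'
  -- standard parts of the scale factors
  have eLL' : toR q' - toR p' = (toR q' - toR ↑f) - (toR p' - toR ↑f) := by ring
  have St1 : IsSt ((toR q' - toR p') / (toR ↑g - toR ↑f)) (β - α) := by
    apply isSt_div_of_bounds hLpos hLinf
    · rw [eLL']
      have : ((β - α : ℝ):ℝ*) * (toR ↑g - toR ↑f)
          = (β:ℝ*) * (toR ↑g - toR ↑f) - (α:ℝ*) * (toR ↑g - toR ↑f) := by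
        push_cast
        ring
      rw [this]
      linarith [b2, b3]
    · rw [eLL']
      have : ((β - α : ℝ):ℝ*) * (toR ↑g - toR ↑f)
          = (β:ℝ*) * (toR ↑g - toR ↑f) - (α:ℝ*) * (toR ↑g - toR ↑f) := by
        push_cast
        ring
      rw [this]
      linarith [b1, b4]
  have St2 : IsSt ((toR p' - toR ↑f) / (toR ↑g - toR ↑f)) α := by
    apply isSt_div_of_bounds hLpos hLinf
    · linarith [b1]
    · linarith [b2]
  refine ⟨p', q', hple, hqle, hinf', ?_, ?_⟩
  · -- the affine rescaling identity
    intro x hx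
    have hx01 := ratio_mem_icc01 (infLt hinf') hx
    have hni' : ¬ Infinite ((toR x - toR p') / (toR q' - toR p')) :=
      not_infinite_of_icc01 hx01.1 hx01.2
    have Stx : IsSt ((toR x - toR p') / (toR q' - toR p')) (stI p' q' x) := by
      rw [stI]; exact isSt_st' hni'
    have ekey : (toR x - toR ↑f) / (toR ↑g - toR ↑f)
        = ((toR x - toR p') / (toR q' - toR p')) * ((toR q' - toR p') / (toR ↑g - toR ↑f))
          + (toR p' - toR ↑f) / (toR ↑g - toR ↑f) := by
      field_simp
      try ring
    have Stfull : IsSt ((toR x - toR ↑f) / (toR ↑g - toR ↑f))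
        (stI p' q' x * (β - α) + α) := by
      rw [ekey]
      exact (Stx.mul St1).add St2
    rw [stI, Stfull.st_eq]
    ring
  · -- membership of points with standard part strictly inside
    intro x hx ht
    set t : ℝ := stI ↑f ↑g x with htdef
    obtain ⟨htα, htβ⟩ := ht
    have hx01 := ratio_mem_icc01 (infLt hpq) hx
    have hni : ¬ Infinite ((toR x - toR ↑f) / (toR ↑g - toR ↑f)) :=
      not_infinite_of_icc01 hx01.1 hx01.2
    have Stx : IsSt ((toR x - toR ↑f) / (toR ↑g - toR ↑f)) t := by
      rw [htdef, stI]; exact isSt_st' hni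
    have ex : toR x - toR ↑f = ((toR x - toR ↑f) / (toR ↑g - toR ↑f)) * (toR ↑g - toR ↑f) := by
      field_simp
    constructor
    · -- p' ≤ x
      have hr0 : ((α + t)/2 : ℝ) < t := by linarith
      have hcoe : (((α + t)/2 : ℝ):ℝ*) < (toR x - toR ↑f) / (toR ↑g - toR ↑f) := by
        apply lt_of_st_lt (not_infinite_real _) hni
        rw [st_id_real, Stx.st_eq]
        exact hr0
      have h1L : (1:ℝ*) ≤ (((t - α)/2 : ℝ):ℝ*) * (toR ↑g - toR ↑f) :=
        one_le_coe_mul hLinf (by linarith)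
      have emul : (((α + t)/2 : ℝ):ℝ*) * (toR ↑g - toR ↑f)
          = (α:ℝ*) * (toR ↑g - toR ↑f) + (((t - α)/2 : ℝ):ℝ*) * (toR ↑g - toR ↑f) := by
        push_cast
        ring
      have hmul : (((α + t)/2 : ℝ):ℝ*) * (toR ↑g - toR ↑f) < toR x - toR ↑f := by
        rw [ex]
        exact mul_lt_mul_of_pos_right hcoe hLpos
      rw [← toR_le_toR]
      have : toR p' - toR ↑f ≤ toR x - toR ↑f := by
        calc toR p' - toR ↑f ≤ (α:ℝ*) * (toR ↑g - toR ↑f) + 1 := b2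
          _ ≤ (((α + t)/2 : ℝ):ℝ*) * (toR ↑g - toR ↑f) := by rw [emul]; linarith [h1L]
          _ ≤ toR x - toR ↑f := hmul.le
      linarith [this]
    · -- x ≤ q'
      have hr1 : t < ((t + β)/2 : ℝ) := by linarith
      have hcoe : (toR x - toR ↑f) / (toR ↑g - toR ↑f) < (((t + β)/2 : ℝ):ℝ*) := by
        apply lt_of_st_lt hni (not_infinite_real _)
        rw [st_id_real, Stx.st_eq]
        exact hr1
      have h1L : (1:ℝ*) ≤ (((β - t)/2 : ℝ):ℝ*) * (toR ↑g - toR ↑f) :=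
        one_le_coe_mul hLinf (by linarith)
      have emul : (((t + β)/2 : ℝ):ℝ*) * (toR ↑g - toR ↑f)
          = (β:ℝ*) * (toR ↑g - toR ↑f) - (((β - t)/2 : ℝ):ℝ*) * (toR ↑g - toR ↑f) := by
        push_cast
        ring
      have hmul : toR x - toR ↑f < (((t + β)/2 : ℝ):ℝ*) * (toR ↑g - toR ↑f) := by
        rw [ex]
        exact mul_lt_mul_of_pos_right hcoe hLpos
      rw [← toR_le_toR]
      have : toR x - toR ↑f ≤ toR q' - toR ↑f := by
        calc toR x - toR ↑f ≤ (((t + β)/2 : ℝ):ℝ*) * (toR ↑g - toR ↑f) := hmul.le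
          _ ≤ (β:ℝ*) * (toR ↑g - toR ↑f) - 1 := by rw [emul]; linarith [h1L]
          _ ≤ toR q' - toR ↑f := b3
      linarith [this]

end Stmt2Aux

namespace Stmt2Aux
open Hyperreal

/-- Finding a rational interval avoiding a closed set while carrying positive outer measure. -/
lemma exists_ball (E F : Set ℝ) (hE : E ⊆ Set.Icc 0 1) (hF : IsClosed F)
    (hpos : volume (E \ F) ≠ 0) :
    ∃ α β : ℝ, 0 ≤ α ∧ α < β ∧ β ≤ 1 ∧ Set.Icc α β ∩ F = ∅ ∧
      volume (E ∩ Set.Ioo α β) ≠ 0 := by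
  classical
  set U := Fᶜ with hU
  have hUopen : IsOpen U := hF.isOpen_compl
  set g : ℚ × ℚ → Set ℝ := fun pq =>
    if Set.Icc (pq.1 : ℝ) (pq.2 : ℝ) ⊆ U then E ∩ Set.Ioo (pq.1 : ℝ) (pq.2 : ℝ) else ∅
    with hg
  have hcov : E \ F ⊆ ⋃ pq : ℚ × ℚ, g pq := by
    intro t ht
    have htU : t ∈ U := ht.2
    obtain ⟨eps, heps, hball⟩ := Metric.isOpen_iff.1 hUopen t htU
    obtain ⟨a, ha1, ha2⟩ := exists_rat_btwn (show t - eps/2 < t by linarith)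
    obtain ⟨b, hb1, hb2⟩ := exists_rat_btwn (show t < t + eps/2 by linarith)
    have hsub : Set.Icc (a:ℝ) (b:ℝ) ⊆ U := by
      intro s hs
      apply hball
      rw [Metric.mem_ball, Real.dist_eq, abs_lt]
      constructor
      · have h1 := hs.1; linarith
      · have h2 := hs.2; linarith
    refine Set.mem_iUnion.2 ⟨(a, b), ?_⟩
    rw [hg]
    simp only [hsub, if_pos]
    exact ⟨ht.1, ha2, hb1⟩
  have hne : ∃ pq : ℚ × ℚ, volume (g pq) ≠ 0 := by
    by_contra hall
    push_neg at hall
    have : volume (⋃ pq : ℚ × ℚ, g pq) = 0 := by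
      rw [measure_iUnion_null_iff]
      exact hall
    exact hpos (measure_mono_null hcov this)
  obtain ⟨⟨a, b⟩, hvol⟩ := hne
  have hIab : Set.Icc (a:ℝ) (b:ℝ) ⊆ U := by
    by_contra hnot
    rw [hg] at hvol
    simp only [hnot, if_neg, not_false_iff] at hvol
    exact hvol (measure_empty)
  rw [hg] at hvol
  simp only [hIab, if_pos] at hvol
  set α := max (a:ℝ) 0 with hα
  set β := min (b:ℝ) 1 with hβ
  have hsub01 : E ∩ Set.Ioo (a:ℝ) (b:ℝ) ⊆ (E ∩ Set.Ioo α β) ∪ ({0, 1} : Set ℝ) := by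
    rintro t ⟨htE, ht1, ht2⟩
    have h01 := hE htE
    rcases eq_or_lt_of_le h01.1 with h | h
    · exact Or.inr (Or.inl h.symm)
    rcases eq_or_lt_of_le h01.2 with h' | h'
    · exact Or.inr (Or.inr h')
    exact Or.inl ⟨htE, max_lt ht1 h, lt_min ht2 h'⟩
  have hvol2 : volume (E ∩ Set.Ioo α β) ≠ 0 := by
    intro h0
    apply hvol
    have h01 : volume ({0, 1} : Set ℝ) = 0 :=
      Set.Finite.measure_zero (μ := volume) ((Set.finite_singleton (1:ℝ)).insert 0)
    have hle2 : volume (E ∩ Set.Ioo (a:ℝ) (b:ℝ)) ≤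
        volume (E ∩ Set.Ioo α β) + volume ({0, 1} : Set ℝ) :=
      (measure_mono hsub01).trans (measure_union_le _ _)
    rw [h0, h01, add_zero] at hle2
    exact le_zero_iff.1 hle2
  have hαβ : α < β := by
    obtain ⟨t, -, ht⟩ := nonempty_of_measure_ne_zero hvol2
    exact ht.1.trans ht.2
  refine ⟨α, β, le_max_right _ _, hαβ, min_le_right _ _, ?_, hvol2⟩
  ext s
  simp only [Set.mem_inter_iff, Set.mem_empty_iff_false, iff_false, not_and]
  intro hsIcc hsF
  have : s ∈ U := hIab ⟨(le_max_left (a:ℝ) 0).trans hsIcc.1, hsIcc.2.trans (min_le_left _ _)⟩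
  exact this hsF

/-- Outer measure estimate under an affine image. -/
lemma volume_le_scale {S T : Set ℝ} {α β : ℝ} (h : α < β)
    (hsub : S ⊆ (fun u => α + (β - α) * u) '' T) :
    volume S ≤ ENNReal.ofReal (β - α) * volume T := by
  have hne : β - α ≠ 0 := by linarith
  have himg : (fun u => α + (β - α) * u) '' T
      ⊆ (fun t => t + (-α)) ⁻¹' (((β - α)⁻¹ * ·) ⁻¹' T) := by
    rintro _ ⟨u, hu, rfl⟩
    have : (β - α)⁻¹ * ((α + (β - α) * u) + (-α)) = u := by field_simp; ring
    simp only [Set.mem_preimage]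
    rw [this]
    exact hu
  calc volume S ≤ volume ((fun t => t + (-α)) ⁻¹' (((β - α)⁻¹ * ·) ⁻¹' T)) :=
        measure_mono (hsub.trans himg)
    _ = volume ((((β - α)⁻¹ * ·)) ⁻¹' T) := measure_preimage_add_right volume (-α) _
    _ = ENNReal.ofReal |((β - α)⁻¹)⁻¹| * volume T :=
        Real.volume_preimage_mul_left (inv_ne_zero hne) T
    _ = ENNReal.ofReal (β - α) * volume T := by
        rw [inv_inv, abs_of_pos (by linarith : (0:ℝ) < β - α)]

/-- The purification dichotomy for a single colour. -/
lemma pur {A Bj : Set SN} {y z u v : SN} (hBj : InternalSet Bj)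
    (hsub : ∀ x, x ∈ Set.Icc y z → x ∈ Bj → x ∈ A)
    (hyu : y ≤ u) (hvz : v ≤ z) (huv : InfInterval u v)
    (hIMA : IMOn A y z) (hlamA : 0 < lam A u v) :
    (∃ u' v' : SN, u ≤ u' ∧ v' ≤ v ∧ InfInterval u' v' ∧ 0 < lam A u' v' ∧
       Bj ∩ Set.Icc u' v' = ∅) ∨ EnhancedIMOn Bj u v := by
  by_cases hK : ∃ p q : SN, u ≤ p ∧ q ≤ v ∧ InfInterval p q ∧
      volume ((stI p q '' (A ∩ Set.Icc p q)) \ (stI p q '' (Bj ∩ Set.Icc p q))) ≠ 0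
  · left
    obtain ⟨p, q, hup, hqv, hpq, hvol⟩ := hK
    obtain ⟨α, β, hα, hαβ, hβ, hFempty, hEpos⟩ :=
      exists_ball (stI p q '' (A ∩ Set.Icc p q)) (stI p q '' (Bj ∩ Set.Icc p q))
        (stImage_subset_icc01 (infLt hpq)) (isClosed_stImage hBj hpq) hvol
    obtain ⟨p', q', hpp', hq'q, hinf', hident, hmem'⟩ := subinterval_exists hpq hα hαβ hβ
    refine ⟨p', q', hup.trans hpp', hq'q.trans hqv, hinf', ?_, ?_⟩
    · -- positive measure on the subinterval
      rw [lam_pos_iff (infLt hinf')]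
      intro h0
      have hsub2 : (stI p q '' (A ∩ Set.Icc p q)) ∩ Set.Ioo α β
          ⊆ (fun w => α + (β - α) * w) '' (stI p' q' '' (A ∩ Set.Icc p' q')) := by
        rintro t ⟨⟨x, ⟨hxA, hxIcc⟩, rfl⟩, htIoo⟩
        have hx' : x ∈ Set.Icc p' q' := hmem' x hxIcc htIoo
        exact ⟨stI p' q' x, ⟨x, ⟨hxA, hx'⟩, rfl⟩, (hident x hx').symm⟩
      have hle := volume_le_scale hαβ hsub2
      rw [h0, mul_zero] at hle
      exact hEpos (le_zero_iff.1 hle)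
    · -- the colour is absent from the subinterval
      ext x
      simp only [Set.mem_inter_iff, Set.mem_empty_iff_false, iff_false, not_and]
      intro hxB hxIcc'
      have hxIcc : x ∈ Set.Icc p q := ⟨hpp'.trans hxIcc'.1, hxIcc'.2.trans hq'q⟩
      have h01 := stI_mem_icc01 (infLt hinf') hxIcc'
      have hid := hident x hxIcc'
      have hstIcc : stI p q x ∈ Set.Icc α β := by
        constructor
        · rw [hid]; nlinarith [h01.1]
        · rw [hid]; nlinarith [h01.2]
      have : stI p q x ∈ Set.Icc α β ∩ (stI p q '' (Bj ∩ Set.Icc p q)) :=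
        ⟨hstIcc, ⟨x, ⟨hxB, hxIcc⟩, rfl⟩⟩
      rw [hFempty] at this
      exact this
  · right
    push_neg at hK
    have hmono : ∀ p q : SN, u ≤ p → q ≤ v → InfInterval p q → lam A p q ≤ lam Bj p q := by
      intro p q hp hq hpq2
      have h0 := hK p q hp hq hpq2
      apply lam_le_lam (infLt hpq2)
      calc volume (stI p q '' (A ∩ Set.Icc p q))
          ≤ volume ((stI p q '' (Bj ∩ Set.Icc p q)) ∪
              ((stI p q '' (A ∩ Set.Icc p q)) \ (stI p q '' (Bj ∩ Set.Icc p q)))) := by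
            apply measure_mono
            intro a ha
            by_cases hmem : a ∈ stI p q '' (Bj ∩ Set.Icc p q)
            · exact Or.inl hmem
            · exact Or.inr ⟨ha, hmem⟩
        _ ≤ volume (stI p q '' (Bj ∩ Set.Icc p q)) +
              volume ((stI p q '' (A ∩ Set.Icc p q)) \ (stI p q '' (Bj ∩ Set.Icc p q))) :=
            measure_union_le _ _
        _ = volume (stI p q '' (Bj ∩ Set.Icc p q)) := by rw [h0, add_zero]
    constructor
    · intro ep hep
      obtain ⟨δ, hδ, hIMc⟩ := hIMA ep hep
      refine ⟨δ, hδ, ?_⟩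
      intro p q hup2 hpq2 hqv2 hinf2 hgap
      have hyp : y ≤ p := hyu.trans hup2
      have hqz : q ≤ z := hqv2.trans hvz
      have hgapA : gap A p q ≤ δ :=
        gap_le_of_subset (infLt hinf2)
          (fun x hx hxB => hsub x ⟨hyp.trans hx.1, hx.2.trans hqz⟩ hxB) hδ.le hgap
      exact (hIMc p q hyp hpq2 hqz hinf2 hgapA).trans (hmono p q hup2 hqv2 hinf2)
    · exact lt_of_lt_of_le hlamA (hmono u v le_rfl le_rfl huv)

end Stmt2Aux

theorem stmt_2 (A : Set SN) (y z : SN) (hA : InternalSet A) (hI : InfInterval y z)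
    (hIM : EnhancedIMOn A y z) (n : ℕ) (B : ℕ → Set SN) (hB : ∀ i < n, InternalSet (B i))
    (hU : A ∩ Set.Icc y z = ⋃ i ∈ Finset.range n, B i) :
    ∃ i < n, ∃ c d : SN, y ≤ c ∧ c ≤ d ∧ d ≤ z ∧ InfInterval c d ∧ EnhancedIMOn (B i) c d := by
  classical
  have hcover : ∀ x, x ∈ A → x ∈ Set.Icc y z → ∃ i, i < n ∧ x ∈ B i := by
    intro x hxA hxI
    have hx : x ∈ ⋃ i ∈ Finset.range n, B i := hU ▸ ⟨hxA, hxI⟩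
    simpa using hx
  have hBsubA : ∀ i, i < n → ∀ x, x ∈ B i → x ∈ A ∩ Set.Icc y z := by
    intro i hi x hx
    rw [hU]
    exact Set.mem_biUnion (Finset.mem_range.2 hi) hx
  have main : ∀ m, m ≤ n →
      (∃ i < n, ∃ c d : SN, y ≤ c ∧ c ≤ d ∧ d ≤ z ∧ InfInterval c d ∧
        EnhancedIMOn (B i) c d) ∨
      (∃ u v : SN, y ≤ u ∧ v ≤ z ∧ InfInterval u v ∧ 0 < lam A u v ∧
        ∀ j, j < m → B j ∩ Set.Icc u v = ∅) := by
    intro m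
    induction m with
    | zero =>
      intro _
      exact Or.inr ⟨y, z, le_rfl, le_rfl, hI, hIM.2, fun j hj => absurd hj (Nat.not_lt_zero j)⟩
    | succ m ih =>
      intro hm
      rcases ih (Nat.le_of_succ_le hm) with h | ⟨u, v, hyu, hvz, huv, hlam, hempty⟩
      · exact Or.inl h
      have hmn : m < n := hm
      have hsubm : ∀ x, x ∈ Set.Icc y z → x ∈ B m → x ∈ A :=
        fun x _ hxB => (hBsubA m hmn x hxB).1
      rcases Stmt2Aux.pur (hB m hmn) hsubm hyu hvz huv hIM.1 hlam with
        ⟨u', v', huu', hv'v, hinf', hlam', hBm⟩ | henh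
      · refine Or.inr ⟨u', v', hyu.trans huu', hv'v.trans hvz, hinf', hlam', ?_⟩
        intro j hj
        rcases Nat.lt_succ_iff_lt_or_eq.1 hj with hjm | rfl
        · apply Set.eq_empty_of_subset_empty
          rw [← hempty j hjm]
          exact Set.inter_subset_inter_right _ (Set.Icc_subset_Icc huu' hv'v)
        · exact hBm
      · exact Or.inl ⟨m, hmn, u, v, hyu, Stmt2Aux.infLe huv, hvz, huv, henh⟩
  rcases main n le_rfl with h | ⟨u, v, hyu, hvz, huv, hlam, hempty⟩
  · exact h
  exfalso
  have hAempty : A ∩ Set.Icc u v = ∅ := by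
    ext x
    simp only [Set.mem_inter_iff, Set.mem_empty_iff_false, iff_false, not_and]
    intro hxA hxuv
    have hxI : x ∈ Set.Icc y z := ⟨hyu.trans hxuv.1, hxuv.2.trans hvz⟩
    obtain ⟨i, hi, hxB⟩ := hcover x hxA hxI
    have hx2 : x ∈ B i ∩ Set.Icc u v := ⟨hxB, hxuv⟩
    rw [hempty i hi] at hx2
    exact hx2
  have hzero : lam A u v = 0 := by
    rw [lam, hAempty]
    simp
  linarith
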